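/- The 4×4 complex matrix A = [[−3,0,w,0],[0,−3,0,w],[w',0,−3,0],[0,w',0,−3]] + [[−1,0,0,1],[0,−2,1,0],[0,1,−1,0],[1,0,0,−1]], where w = 1 + z₁⁻¹ + z₂⁻¹ and w' = 1 + z₁ + z₂, has determinant equal to a Laurent polynomial in z₁, z₂ that is irreducible in the ring of Laurent polynomials ℂ[z₁^{±1}, z₂^{±1}] modulo units (monomials); i.e., det A cannot be written as a product f·g of two Laurent polynomials f, g ∈ ℂ[z₁^{±1}, z₂^{±1}] neither of which is a monomial. -/

import Mathlib

open Matrix Polynomial LaurentPolynomial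

noncomputable def LaurentZZ := AddMonoidAlgebra ℂ (ℤ × ℤ)

noncomputable instance : CommRing LaurentZZ := AddMonoidAlgebra.commRing

/-- monomial `c·z₁^a·z₂^b` -/
def LaurentZZ.IsMonomial (f : LaurentZZ) : Prop :=
  ∃ (a : ℤ × ℤ) (c : ℂ), f = AddMonoidAlgebra.single a c

noncomputable def zz (a b : ℤ) : LaurentZZ := AddMonoidAlgebra.single (a, b) 1

-- Abbreviations
local notation "A" => LaurentPolynomial ℂ
local notation "S" => LaurentPolynomial (LaurentPolynomial ℂ)

namespace CBG

/-- the monoid hom (ℤ×ℤ) → S, (a,b) ↦ T_u^{a+b} * C(T_t^{-b}) -/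
noncomputable def phiMon : Multiplicative (ℤ × ℤ) →* S where
  toFun p := AddMonoidAlgebra.single (p.toAdd.1 + p.toAdd.2)
      (AddMonoidAlgebra.single (-(p.toAdd.2)) (1:ℂ))
  map_one' := by
    simp only [toAdd_one, Prod.fst_zero, Prod.snd_zero, add_zero, neg_zero]
    rw [AddMonoidAlgebra.one_def (R := LaurentPolynomial ℂ) (M := ℤ)]
    rw [AddMonoidAlgebra.one_def (R := ℂ) (M := ℤ)]
  map_mul' p q := by
    rw [AddMonoidAlgebra.single_mul_single, AddMonoidAlgebra.single_mul_single]
    simp only [toAdd_mul, Prod.fst_add, Prod.snd_add, mul_one]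
    congr 1 <;> ring_nf

/-- Φ : LaurentZZ →+* S -/
noncomputable def Phi : LaurentZZ →+* S :=
  AddMonoidAlgebra.liftNCRingHom
    ((LaurentPolynomial.C).comp (LaurentPolynomial.C : ℂ →+* LaurentPolynomial ℂ))
    phiMon (fun _ _ => Commute.all _ _)

lemma Phi_single (a b : ℤ) (c : ℂ) :
    Phi (AddMonoidAlgebra.single (a, b) c)
      = AddMonoidAlgebra.single (a + b) (AddMonoidAlgebra.single (-b) c) := by
  rw [Phi, AddMonoidAlgebra.liftNCRingHom]
  show AddMonoidAlgebra.liftNC _ _ (AddMonoidAlgebra.single ((a,b) : ℤ × ℤ) c) = _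
  rw [AddMonoidAlgebra.liftNC_single]
  show LaurentPolynomial.C (LaurentPolynomial.C c) * phiMon (Multiplicative.ofAdd ((a,b) : ℤ × ℤ)) = _
  rw [phiMon]
  show LaurentPolynomial.C (LaurentPolynomial.C c) *
    AddMonoidAlgebra.single (a + b) (AddMonoidAlgebra.single (-b) (1:ℂ)) = _
  show AddMonoidAlgebra.single (0:ℤ) (AddMonoidAlgebra.single (0:ℤ) c) *
    AddMonoidAlgebra.single (a + b) (AddMonoidAlgebra.single (-b) (1:ℂ)) = _
  rw [AddMonoidAlgebra.single_mul_single, AddMonoidAlgebra.single_mul_single, zero_add, zero_add,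
      mul_one]

noncomputable def psiInnerMon : Multiplicative ℤ →* LaurentZZ where
  toFun n := AddMonoidAlgebra.single (n.toAdd, -n.toAdd) 1
  map_one' := by
    show AddMonoidAlgebra.single ((0:ℤ), -(0:ℤ)) (1:ℂ) = 1
    rw [neg_zero, AddMonoidAlgebra.one_def]
    rfl
  map_mul' p q := by
    erw [AddMonoidAlgebra.single_mul_single]
    simp only [toAdd_mul, mul_one, Prod.mk_add_mk, neg_add]
    rfl

/-- ι : A →+* LaurentZZ, single i c ↦ single (i,−i) c -/
noncomputable def iota : LaurentPolynomial ℂ →+* LaurentZZ :=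
  AddMonoidAlgebra.liftNCRingHom
    (AddMonoidAlgebra.singleZeroRingHom)
    psiInnerMon (fun _ _ => Commute.all _ _)

lemma iota_single (i : ℤ) (c : ℂ) :
    iota (AddMonoidAlgebra.single i c) = AddMonoidAlgebra.single (i, -i) c := by
  unfold iota AddMonoidAlgebra.liftNCRingHom
  show AddMonoidAlgebra.liftNC _ _ (AddMonoidAlgebra.single i c) = _
  rw [AddMonoidAlgebra.liftNC_single]
  show AddMonoidAlgebra.single (0 : ℤ × ℤ) c * AddMonoidAlgebra.single ((i:ℤ), -(i:ℤ)) (1:ℂ) = _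
  rw [AddMonoidAlgebra.single_mul_single, zero_add, mul_one]

noncomputable def psiOuterMon : Multiplicative ℤ →* LaurentZZ where
  toFun n := AddMonoidAlgebra.single (n.toAdd, 0) 1
  map_one' := by
    show AddMonoidAlgebra.single ((0:ℤ), (0:ℤ)) (1:ℂ) = 1
    rw [AddMonoidAlgebra.one_def]
    rfl
  map_mul' p q := by
    erw [AddMonoidAlgebra.single_mul_single]
    simp only [toAdd_mul, mul_one, Prod.mk_add_mk, add_zero]
    rfl

noncomputable def Psi : LaurentPolynomial (LaurentPolynomial ℂ) →+* LaurentZZ :=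
  AddMonoidAlgebra.liftNCRingHom iota psiOuterMon (fun _ _ => Commute.all _ _)

lemma Psi_single (j i : ℤ) (c : ℂ) :
    Psi (AddMonoidAlgebra.single j (AddMonoidAlgebra.single i c))
      = AddMonoidAlgebra.single (i + j, -i) c := by
  rw [Psi, AddMonoidAlgebra.liftNCRingHom]
  show AddMonoidAlgebra.liftNC _ _ _ = _
  rw [AddMonoidAlgebra.liftNC_single]
  show iota (AddMonoidAlgebra.single i c) * psiOuterMon (Multiplicative.ofAdd j) = _
  rw [iota_single]
  show ((AddMonoidAlgebra.single ((i:ℤ), -(i:ℤ)) c : AddMonoidAlgebra ℂ (ℤ × ℤ)) *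
      AddMonoidAlgebra.single ((j:ℤ), (0:ℤ)) (1:ℂ) : AddMonoidAlgebra ℂ (ℤ × ℤ)) = _
  rw [AddMonoidAlgebra.single_mul_single, mul_one, Prod.mk_add_mk, add_zero]

lemma Psi_Phi (x : LaurentZZ) : Psi (Phi x) = x := by
  induction x using AddMonoidAlgebra.induction_linear with
  | zero => exact (congrArg Psi (map_zero Phi)).trans (map_zero Psi)
  | add f g hf hg =>
    exact (congrArg Psi (map_add Phi f g)).trans ((map_add Psi (Phi f) (Phi g)).trans (congrArg₂ (· + ·) hf hg))
  | single a c =>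
      show Psi (Phi (AddMonoidAlgebra.single (a.1, a.2) c)) = _
      rw [Phi_single, Psi_single]
      congr 1
      rw [Prod.ext_iff]
      constructor <;> ring

lemma Phi_injective : Function.Injective Phi :=
  Function.LeftInverse.injective Psi_Phi

noncomputable def KA : LaurentPolynomial ℂ := T 3 - 15 * T 2 - 15 * T 1 + 1
noncomputable def LA : LaurentPolynomial ℂ := T 4 - 28 * T 3 + 190 * T 2 - 28 * T 1 + 1

noncomputable def Kpoly : Polynomial ℂ := X^3 - 15*X^2 - 15*X + 1
noncomputable def Lpoly : Polynomial ℂ := X^4 - 28*X^3 + 190*X^2 - 28*X + 1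

noncomputable def Qpoly : Polynomial (LaurentPolynomial ℂ) :=
  Polynomial.C (2 * KA) * X^2 + Polynomial.C LA * X + Polynomial.C (2 * T 1 * KA)

lemma KA_eq : KA = toLaurent Kpoly := by
  simp only [KA, Kpoly, map_add, map_sub, _root_.map_mul, map_pow, _root_.map_one, map_ofNat,
    Polynomial.toLaurent_X]
  have h3 : (T 3 : LaurentPolynomial ℂ) = T 1 * T 1 * T 1 := by
    rw [← T_add, ← T_add]; norm_num
  have h2 : (T 2 : LaurentPolynomial ℂ) = T 1 * T 1 := by rw [← T_add]; norm_num
  rw [h3, h2]; ring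

lemma LA_eq : LA = toLaurent Lpoly := by
  simp only [LA, Lpoly, map_add, map_sub, _root_.map_mul, map_pow, _root_.map_one, map_ofNat,
    Polynomial.toLaurent_X]
  have h4 : (T 4 : LaurentPolynomial ℂ) = T 1 * T 1 * T 1 * T 1 := by
    rw [← T_add, ← T_add, ← T_add]; norm_num
  have h3 : (T 3 : LaurentPolynomial ℂ) = T 1 * T 1 * T 1 := by
    rw [← T_add, ← T_add]; norm_num
  have h2 : (T 2 : LaurentPolynomial ℂ) = T 1 * T 1 := by rw [← T_add]; norm_num
  rw [h4, h3, h2]; ring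

lemma Phi_zz10 : Phi (zz 1 0) = T 1 := by
  rw [zz, Phi_single]
  norm_num

lemma Phi_zz01 : Phi (zz 0 1) = LaurentPolynomial.C (T (-1)) * T 1 := by
  rw [zz, Phi_single, ← single_eq_C_mul_T]
  norm_num

lemma Phi_zzm10 : Phi (zz (-1) 0) = T (-1) := by
  rw [zz, Phi_single]
  norm_num

lemma Phi_zz0m1 : Phi (zz 0 (-1)) = LaurentPolynomial.C (T 1) * T (-1) := by
  rw [zz, Phi_single, ← single_eq_C_mul_T]
  norm_num

set_option maxRecDepth 100000 in
set_option maxHeartbeats 2000000 in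
theorem det4 {R : Type*} [CommRing R] (M : Matrix (Fin 4) (Fin 4) R) : M.det =
      M 0 0*M 1 1*M 2 2*M 3 3 - M 0 0*M 1 1*M 2 3*M 3 2 - M 0 0*M 1 2*M 2 1*M 3 3
      + M 0 0*M 1 2*M 2 3*M 3 1 + M 0 0*M 1 3*M 2 1*M 3 2 - M 0 0*M 1 3*M 2 2*M 3 1
      - M 0 1*M 1 0*M 2 2*M 3 3 + M 0 1*M 1 0*M 2 3*M 3 2 + M 0 1*M 1 2*M 2 0*M 3 3
      - M 0 1*M 1 2*M 2 3*M 3 0 - M 0 1*M 1 3*M 2 0*M 3 2 + M 0 1*M 1 3*M 2 2*M 3 0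
      + M 0 2*M 1 0*M 2 1*M 3 3 - M 0 2*M 1 0*M 2 3*M 3 1 - M 0 2*M 1 1*M 2 0*M 3 3
      + M 0 2*M 1 1*M 2 3*M 3 0 + M 0 2*M 1 3*M 2 0*M 3 1 - M 0 2*M 1 3*M 2 1*M 3 0
      - M 0 3*M 1 0*M 2 1*M 3 2 + M 0 3*M 1 0*M 2 2*M 3 1 + M 0 3*M 1 1*M 2 0*M 3 2
      - M 0 3*M 1 1*M 2 2*M 3 0 - M 0 3*M 1 2*M 2 0*M 3 1 + M 0 3*M 1 2*M 2 1*M 3 0 := by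
  have h1 : (Fin.succ 2 : Fin 4) = 3 := by decide
  have h2 : (Fin.castSucc 2 : Fin 4) = 2 := by decide
  rw [Matrix.det_succ_row_zero, Fin.sum_univ_four]
  simp only [Matrix.det_fin_three, Matrix.submatrix_apply]
  simp [Fin.succAbove, Fin.lt_def, h1, h2]
  norm_num
  ring

noncomputable def detMat : Matrix (Fin 4) (Fin 4) LaurentZZ :=
  (!![-3, 0, 1 + zz (-1) 0 + zz 0 (-1), 0;
       0, -3, 0, 1 + zz (-1) 0 + zz 0 (-1);
       1 + zz 1 0 + zz 0 1, 0, -3, 0;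
       0, 1 + zz 1 0 + zz 0 1, 0, -3] +
    !![-1, 0, 0, 1;
       0, -2, 1, 0;
       0, 1, -1, 0;
       1, 0, 0, -1])

set_option maxRecDepth 100000 in
set_option maxHeartbeats 3000000 in
lemma main_det :
    Phi detMat.det * (T 1 * LaurentPolynomial.C (T 1) * LaurentPolynomial.C (T 1))
      = toLaurent Qpoly := by
  have e1 : (T 1 : LaurentPolynomial (LaurentPolynomial ℂ)) * T (-1) = 1 := by
    rw [← T_add]; norm_num
  have e2 : (LaurentPolynomial.C (T 1 : LaurentPolynomial ℂ)
      : LaurentPolynomial (LaurentPolynomial ℂ)) * LaurentPolynomial.C (T (-1)) = 1 := by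
    rw [← _root_.map_mul, ← T_add]
    norm_num
  have hq : toLaurent Qpoly =
      2 * (LaurentPolynomial.C (T 1)) * (LaurentPolynomial.C (T 1)^3
        - 15 * LaurentPolynomial.C (T 1)^2 - 15 * LaurentPolynomial.C (T 1) + 1)
      + (LaurentPolynomial.C (T 1)^4 - 28 * LaurentPolynomial.C (T 1)^3
        + 190 * LaurentPolynomial.C (T 1)^2 - 28 * LaurentPolynomial.C (T 1) + 1) * T 1
      + 2 * (LaurentPolynomial.C (T 1)^3 - 15 * LaurentPolynomial.C (T 1)^2
        - 15 * LaurentPolynomial.C (T 1) + 1) * (T 1)^2 := by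
    rw [Qpoly, KA_eq, LA_eq]
    simp only [map_add, map_sub, _root_.map_mul, map_pow, _root_.map_one, map_ofNat,
      Polynomial.toLaurent_X, Polynomial.toLaurent_C, Kpoly, Lpoly]
    ring
  rw [RingHom.map_det, hq, det4]
  simp only [RingHom.mapMatrix_apply, Matrix.map_apply, detMat, Matrix.add_apply]
  norm_num [map_add, _root_.map_one, map_neg, map_ofNat, Phi_zz10, Phi_zz01, Phi_zzm10,
    Phi_zz0m1, Matrix.cons_val_two, Matrix.cons_val_three, Matrix.vecHead, Matrix.vecTail]
  have e3 : (T 2 : LaurentPolynomial (LaurentPolynomial ℂ)) = T 1 * T 1 := by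
    rw [← T_add]; norm_num
  simp only [e3]
  set x := (T 1 : LaurentPolynomial (LaurentPolynomial ℂ)) with hx
  set xi := (T (-1) : LaurentPolynomial (LaurentPolynomial ℂ)) with hxi
  set y := (LaurentPolynomial.C (T 1 : LaurentPolynomial ℂ)
      : LaurentPolynomial (LaurentPolynomial ℂ)) with hy
  set yi := (LaurentPolynomial.C (T (-1) : LaurentPolynomial ℂ)
      : LaurentPolynomial (LaurentPolynomial ℂ)) with hyi
  linear_combination
    (-34 * y^2 + 2 * y^2 * yi - 32 * y^3 + 4 * y^3 * yi + 2 * y^4 + 2 * y^4 * yi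
      - 31 * x * y^2 - 30 * x * y^2 * yi + 1 * x * y^2 * yi^2 - 30 * x * y^3
      - 28 * x * y^3 * yi + 2 * x * y^3 * yi^2 + 1 * x * y^4 + 2 * x * y^4 * yi
      + 1 * x * y^4 * yi^2 + 2 * x * xi * y^2 + 2 * x * xi * y^2 * yi + 4 * x * xi * y^3
      + 4 * x * xi * y^3 * yi + 2 * x * xi * y^4 + 2 * x * xi * y^4 * yi + 2 * x^2 * y^2
      + 4 * x^2 * y^2 * yi + 2 * x^2 * y^2 * yi^2 + 2 * x^2 * y^3 + 4 * x^2 * y^3 * yi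
      + 2 * x^2 * y^3 * yi^2 + 1 * x^2 * xi * y^2 + 2 * x^2 * xi * y^2 * yi
      + 1 * x^2 * xi * y^2 * yi^2 + 2 * x^2 * xi * y^3 + 4 * x^2 * xi * y^3 * yi
      + 2 * x^2 * xi * y^3 * yi^2 + 1 * x^2 * xi * y^4 + 2 * x^2 * xi * y^4 * yi
      + 1 * x^2 * xi * y^4 * yi^2) * e1 +
    (2 * y + 4 * y^2 + 2 * y^3 + 1 * x - 28 * x * y + 1 * x * y * yi - 27 * x * y^2
      + 2 * x * y^2 * yi + 2 * x * y^3 + 1 * x * y^3 * yi + 2 * x^2 - 30 * x^2 * y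
      + 2 * x^2 * y * yi + 4 * x^2 * y^2 + 2 * x^2 * y^2 * yi) * e2

lemma strip {R : Type*} [CommRing R] (p : Polynomial R) (hp : p ≠ 0) :
    ∃ (e : ℕ) (q : Polynomial R), p = X^e * q ∧ q.coeff 0 ≠ 0 := by
  obtain ⟨q, hq, hnd⟩ := p.exists_eq_pow_rootMultiplicity_mul_and_not_dvd hp 0
  refine ⟨p.rootMultiplicity 0, q, ?_, ?_⟩
  · simpa using hq
  · intro h
    exact hnd (by rw [map_zero, sub_zero]; exact X_dvd_iff.mpr h)

lemma cancelX {R : Type*} [CommRing R] [Nontrivial R] [NoZeroDivisors R] (p q : Polynomial R)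
    (hp : p.coeff 0 ≠ 0) (hq : q.coeff 0 ≠ 0) {m n : ℕ} (h : p * X^m = q * X^n) :
    p = q := by
  rcases le_total m n with hle | hle
  · obtain ⟨k, rfl⟩ := Nat.exists_eq_add_of_le hle
    rw [pow_add] at h
    rw [show q * (X^m * X^k) = q * X^k * X^m by ring] at h
    have h2 : p = q * X^k :=
      mul_right_cancel₀ (pow_ne_zero _ Polynomial.X_ne_zero) h
    rcases Nat.eq_zero_or_pos k with hk | hk
    · rw [h2, hk, pow_zero, mul_one]
    · exfalso
      apply hp
      rw [h2, Polynomial.mul_coeff_zero]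
      have : (X^k : Polynomial R).coeff 0 = 0 := by
        rw [Polynomial.coeff_X_pow]
        exact if_neg (by omega)
      rw [this, mul_zero]
  · obtain ⟨k, rfl⟩ := Nat.exists_eq_add_of_le hle
    rw [pow_add] at h
    rw [show p * (X^n * X^k) = p * X^k * X^n by ring] at h
    have h2 : p * X^k = q :=
      mul_right_cancel₀ (pow_ne_zero _ Polynomial.X_ne_zero) h
    rcases Nat.eq_zero_or_pos k with hk | hk
    · rw [← h2, hk, pow_zero, mul_one]
    · exfalso
      apply hq
      rw [← h2, Polynomial.mul_coeff_zero]
      have : (X^k : Polynomial R).coeff 0 = 0 := by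
        rw [Polynomial.coeff_X_pow]
        exact if_neg (by omega)
      rw [this, mul_zero]

lemma quad_c0 {R : Type*} [Semiring R] (a b c : R) :
    (Polynomial.C a * X^2 + Polynomial.C b * X + Polynomial.C c).coeff 0 = c := by
  simp [coeff_add, coeff_C, Polynomial.coeff_C_mul, Polynomial.coeff_X_pow]

lemma quad_c1 {R : Type*} [Semiring R] (a b c : R) :
    (Polynomial.C a * X^2 + Polynomial.C b * X + Polynomial.C c).coeff 1 = b := by
  simp [coeff_add, coeff_C, Polynomial.coeff_C_mul, Polynomial.coeff_X_pow]

lemma quad_c2 {R : Type*} [Semiring R] (a b c : R) :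
    (Polynomial.C a * X^2 + Polynomial.C b * X + Polynomial.C c).coeff 2 = a := by
  simp [coeff_add, coeff_C, Polynomial.coeff_C_mul, Polynomial.coeff_X_pow]

/-- units of the Laurent polynomial ring over ℂ are single monomials -/
lemma isUnit_laurent {a : LaurentPolynomial ℂ} (h : IsUnit a) :
    ∃ (n : ℤ) (c : ℂ), a = AddMonoidAlgebra.single n c := by
  obtain ⟨b, hb⟩ := h.exists_right_inv
  obtain ⟨n, a', ha'⟩ := exists_T_pow a
  obtain ⟨m, b', hb'⟩ := exists_T_pow b
  have hab : toLaurent (a' * b') = T ((n:ℤ) + m) := by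
    rw [_root_.map_mul, ha', hb', T_add]
    calc a * T n * (b * T m) = (a * b) * (T n * T m) := by ring
    _ = T n * T m := by rw [hb, one_mul]
  have ha'ne : a' ≠ 0 := by
    intro h0
    rw [h0, map_zero] at ha'
    have : a * T n = 0 := ha'.symm
    rcases mul_eq_zero.mp this with h | h
    · rw [h, zero_mul] at hb; simp at hb
    · exact (isUnit_T (n:ℤ)).ne_zero h
  have hb'ne : b' ≠ 0 := by
    intro h0
    rw [h0, map_zero] at hb'
    have : b * T m = 0 := hb'.symm
    rcases mul_eq_zero.mp this with h | h
    · rw [h, mul_zero] at hb; simp at hb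
    · exact (isUnit_T (m:ℤ)).ne_zero h
  obtain ⟨e, a0, ha0, ha0c⟩ := strip a' ha'ne
  obtain ⟨e', b0, hb0, hb0c⟩ := strip b' hb'ne
  have hXNM : toLaurent (a' * b') = toLaurent (X^(n+m)) := by
    rw [Polynomial.toLaurent_X_pow, hab]; norm_num
  have hpoly : X^(e+e') * (a0 * b0) = 1 * X^(n+m) := by
    rw [one_mul]
    have := toLaurent_injective hXNM
    rw [ha0, hb0] at this
    rw [← this]; ring
  have h1 : a0 * b0 = 1 := by
    have := cancelX (a0*b0) 1 ?_ ?_ (by rw [mul_comm (a0*b0) (X^(e+e'))]; exact hpoly)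
    · exact this
    · rw [Polynomial.mul_coeff_zero]
      exact mul_ne_zero ha0c hb0c
    · simp
  have hu : IsUnit a0 := IsUnit.of_mul_eq_one _ h1
  obtain ⟨r, _, hr⟩ := Polynomial.isUnit_iff.mp hu
  refine ⟨(e:ℤ) - n, r, ?_⟩
  have : a * T (n:ℤ) = toLaurent (X^e * Polynomial.C r) := by
    rw [_root_.map_mul, Polynomial.toLaurent_X_pow, Polynomial.toLaurent_C, ← ha',
      ha0, ← hr, _root_.map_mul, Polynomial.toLaurent_X_pow, Polynomial.toLaurent_C]
  have h2 : a = toLaurent (X^e * Polynomial.C r) * T (-(n:ℤ)) := by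
    rw [← this]
    calc a = a * (T (n:ℤ) * T (-(n:ℤ))) := by rw [← T_add]; norm_num
    _ = a * T (n:ℤ) * T (-(n:ℤ)) := by ring
  show a = AddMonoidAlgebra.single ((e:ℤ) - n) r
  rw [h2, _root_.map_mul, Polynomial.toLaurent_X_pow, Polynomial.toLaurent_C,
    single_eq_C_mul_T r ((e:ℤ) - n)]
  rw [show ((e:ℤ) - n) = (e:ℤ) + (-(n:ℤ)) by ring, T_add]
  ring

lemma isMonomial_of (f : LaurentZZ) (n e : ℕ) (a : LaurentPolynomial ℂ)
    (h : Phi f * T ((n : ℤ)) = toLaurent (X^e * Polynomial.C a)) (ha : IsUnit a) :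
    f.IsMonomial := by
  obtain ⟨i, c, rfl⟩ := isUnit_laurent ha
  have hPhi : Phi f = AddMonoidAlgebra.single ((e:ℤ) - n) (AddMonoidAlgebra.single i c) := by
    have h2 : Phi f
        = toLaurent (X^e * Polynomial.C (AddMonoidAlgebra.single i c)) * T (-(n:ℤ)) := by
      rw [← h]
      calc Phi f = Phi f * (T (n:ℤ) * T (-(n:ℤ))) := by rw [← T_add]; norm_num
      _ = Phi f * T (n:ℤ) * T (-(n:ℤ)) := by ring
    show Phi f = AddMonoidAlgebra.single ((e:ℤ) - n) (AddMonoidAlgebra.single i c)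
    rw [h2, _root_.map_mul, Polynomial.toLaurent_X_pow, Polynomial.toLaurent_C,
      single_eq_C_mul_T (AddMonoidAlgebra.single i c : LaurentPolynomial ℂ), show ((e:ℤ) - n) = (e:ℤ) + (-(n:ℤ)) by ring, T_add]
    ring
  have hf : f = AddMonoidAlgebra.single (i + ((e:ℤ) - n), -i) c := by
    apply Phi_injective
    rw [hPhi, Phi_single]
    congr 1
    · ring
    · congr 1
      ring
  exact ⟨_, c, hf⟩

lemma Kpoly_ne : Kpoly ≠ 0 := by
  intro h
  have := congrArg (Polynomial.eval 0) h
  norm_num [Kpoly] at this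

lemma KA_ne : KA ≠ 0 := by
  rw [KA_eq]
  rw [Ne, Polynomial.toLaurent_eq_zero]
  exact Kpoly_ne

lemma two_T_KA_ne : (2 : LaurentPolynomial ℂ) * T 1 * KA ≠ 0 := by
  refine mul_ne_zero (mul_ne_zero ?_ (isUnit_T 1).ne_zero) KA_ne
  have : ((2 : ℂ[X]) : Polynomial ℂ) ≠ 0 := by
    intro h
    have := congrArg (Polynomial.eval 0) h
    norm_num at this
  rw [show (2 : LaurentPolynomial ℂ) = toLaurent (2 : ℂ[X]) from (map_ofNat _ 2).symm,
    Ne, Polynomial.toLaurent_eq_zero]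
  exact this

lemma CT2_coeff_ne : (T 2 : LaurentPolynomial ℂ) ≠ 0 := (isUnit_T 2).ne_zero

/-- Bézout certificate for coprimality of Kpoly and Lpoly -/
lemma cert1 : ((30249 : ℂ[X]) - 351461*X + 52159*X^2 - 1867*X^3) * Kpoly
    + ((-29753 : ℂ[X]) - 27888*X + 1867*X^2) * Lpoly = 496 := by
  rw [Kpoly, Lpoly]
  ring

/-- the A-side certificate -/
lemma cert1A : toLaurent ((30249 : ℂ[X]) - 351461*X + 52159*X^2 - 1867*X^3) * KA
    + toLaurent ((-29753 : ℂ[X]) - 27888*X + 1867*X^2) * LA = 496 := by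
  rw [KA_eq, LA_eq, ← _root_.map_mul, ← _root_.map_mul, ← map_add, cert1]
  exact map_ofNat _ 496

lemma unit_of_dvd {a : LaurentPolynomial ℂ} (h2K : a ∣ 2 * KA) (hL : a ∣ LA) : IsUnit a := by
  have hKA : a ∣ KA := by
    have h2 : LaurentPolynomial.C (2⁻¹ : ℂ) * (2 * KA) = KA := by
      rw [show (2 : LaurentPolynomial ℂ) = LaurentPolynomial.C (2:ℂ) from (map_ofNat _ 2).symm,
        ← mul_assoc, ← _root_.map_mul]
      norm_num
    rw [← h2]
    exact Dvd.dvd.mul_left h2K _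
  have h496 : a ∣ (496 : LaurentPolynomial ℂ) := by
    rw [← cert1A]
    exact dvd_add (Dvd.dvd.mul_left hKA _) (Dvd.dvd.mul_left hL _)
  have : IsUnit (496 : LaurentPolynomial ℂ) := by
    apply IsUnit.of_mul_eq_one (LaurentPolynomial.C (496⁻¹ : ℂ))
    rw [show (496 : LaurentPolynomial ℂ) = LaurentPolynomial.C (496:ℂ) from (map_ofNat _ 496).symm,
      ← _root_.map_mul]
    norm_num
  exact isUnit_of_dvd_unit h496 this

lemma delta_eval0 : (Lpoly^2 - 16*X*Kpoly^2).coeff 0 = 1 := by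
  rw [Polynomial.coeff_zero_eq_eval_zero]
  norm_num [Kpoly, Lpoly]

lemma delta_ne : (Lpoly^2 - 16*X*Kpoly^2 : ℂ[X]) ≠ 0 := by
  intro h
  have := delta_eval0
  rw [h] at this
  norm_num at this

lemma delta_explicit : (Lpoly^2 - 16*X*Kpoly^2 : ℂ[X])
    = X^8 - 72*X^7 + 1644*X^6 - 13816*X^5 + 30438*X^4 - 13816*X^3 + 1644*X^2 - 72*X + 1 := by
  rw [Kpoly, Lpoly]
  ring

lemma delta_derivative : Polynomial.derivative (Lpoly^2 - 16*X*Kpoly^2 : ℂ[X])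
    = 8*X^7 - 504*X^6 + 9864*X^5 - 69080*X^4 + 121752*X^3 - 41448*X^2 + 3288*X - 72 := by
  rw [delta_explicit]
  simp only [derivative_add, derivative_sub, derivative_mul, derivative_X_pow,
    derivative_ofNat, derivative_one, derivative_X, Polynomial.C_eq_natCast]
  push_cast
  ring

lemma not_square (s : LaurentPolynomial ℂ) (hs : s^2 = toLaurent (Lpoly^2 - 16*X*Kpoly^2)) :
    False := by
  obtain ⟨m, S1, hS1⟩ := exists_T_pow s
  have hsq : S1^2 = (Lpoly^2 - 16*X*Kpoly^2) * X^(m+m) := by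
    apply toLaurent_injective
    rw [map_pow, hS1, mul_pow, hs, _root_.map_mul, Polynomial.toLaurent_X_pow]
    rw [show ((m+m : ℕ) : ℤ) = (m:ℤ) + (m:ℤ) by push_cast; ring, T_add]
    ring
  have hS1ne : S1 ≠ 0 := by
    intro h
    rw [h] at hsq
    exact (mul_ne_zero delta_ne (pow_ne_zero _ Polynomial.X_ne_zero)) (by rw [← hsq]; ring)
  obtain ⟨e, S0, hstrip, hS0c⟩ := strip S1 hS1ne
  have hS0sq : S0^2 = Lpoly^2 - 16*X*Kpoly^2 := by
    apply cancelX (m := e+e) (n := m+m)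
    · rw [pow_two, Polynomial.mul_coeff_zero]
      exact mul_ne_zero hS0c hS0c
    · rw [delta_eval0]; norm_num
    · rw [← hsq, hstrip]; ring
  have hdvd1 : S0 ∣ (Lpoly^2 - 16*X*Kpoly^2) := ⟨S0, by rw [← hS0sq]; ring⟩
  have hdvd2 : S0 ∣ Polynomial.derivative (Lpoly^2 - 16*X*Kpoly^2) := by
    rw [← hS0sq]
    rw [show (S0^2 : ℂ[X]) = S0 * S0 by ring, derivative_mul]
    exact dvd_add (Dvd.dvd.mul_left (dvd_refl _) _) (Dvd.dvd.mul_right (dvd_refl _) _)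
  have hdvdN : S0 ∣ (1121832960 : ℂ[X]) := by
    have hc : ((-8761226282256 : ℂ[X]) + 260449441612968*X - 898070374855368*X^2
          + 523504429443408*X^3 - 75184835584448*X^4 + 3850087324552*X^5 - 61173577512*X^6)
          * (Lpoly^2 - 16*X*Kpoly^2)
        + ((-121699279378 : ℂ[X]) + 6820979213063*X - 91421038816770*X^2
          + 226154208763791*X^3 - 104858170287534*X^4 + 12536567926693*X^5
          - 550081190270*X^6 + 7646697189*X^7)
          * Polynomial.derivative (Lpoly^2 - 16*X*Kpoly^2) = 1121832960 := by
      rw [delta_derivative, delta_explicit]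
      ring
    rw [← hc]
    exact dvd_add (Dvd.dvd.mul_left hdvd1 _) (Dvd.dvd.mul_left hdvd2 _)
  have hunit : IsUnit S0 := by
    refine isUnit_of_dvd_unit hdvdN ?_
    apply IsUnit.of_mul_eq_one (Polynomial.C ((1121832960 : ℂ)⁻¹))
    rw [show (1121832960 : ℂ[X]) = Polynomial.C (1121832960 : ℂ) from (map_ofNat _ _).symm,
      ← _root_.map_mul]
    norm_num
  obtain ⟨r, _, hr⟩ := Polynomial.isUnit_iff.mp hunit
  have h1 := congrArg (Polynomial.eval 1) hS0sq
  have h0 := congrArg (Polynomial.eval 0) hS0sq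
  rw [← hr] at h0 h1
  norm_num [Kpoly, Lpoly] at h0 h1
  rcases h0 with rfl | rfl <;> norm_num at h1

lemma twoA_ne : (2 : LaurentPolynomial ℂ) ≠ 0 := by
  have h : ((2 : ℂ[X]) : Polynomial ℂ) ≠ 0 := by
    intro h
    have := congrArg (Polynomial.eval 0) h
    norm_num at this
  rw [show (2 : LaurentPolynomial ℂ) = toLaurent (2 : ℂ[X]) from (map_ofNat _ 2).symm,
    Ne, Polynomial.toLaurent_eq_zero]
  exact h

lemma two_KA_ne : (2 : LaurentPolynomial ℂ) * KA ≠ 0 := mul_ne_zero twoA_ne KA_ne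

lemma Qc0 : Qpoly.coeff 0 = 2 * T 1 * KA := by
  show (Polynomial.C (2 * KA) * X^2 + Polynomial.C LA * X
    + Polynomial.C (2 * T 1 * KA)).coeff 0 = _
  exact quad_c0 _ _ _

lemma Qc1 : Qpoly.coeff 1 = LA := by
  show (Polynomial.C (2 * KA) * X^2 + Polynomial.C LA * X
    + Polynomial.C (2 * T 1 * KA)).coeff 1 = _
  exact quad_c1 _ _ _

lemma Qc2 : Qpoly.coeff 2 = 2 * KA := by
  show (Polynomial.C (2 * KA) * X^2 + Polynomial.C LA * X
    + Polynomial.C (2 * T 1 * KA)).coeff 2 = _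
  exact quad_c2 _ _ _

lemma Qdeg : Qpoly.natDegree = 2 := by
  show (Polynomial.C (2 * KA) * X^2 + Polynomial.C LA * X
    + Polynomial.C (2 * T 1 * KA)).natDegree = 2
  exact Polynomial.natDegree_quadratic two_KA_ne

end CBG

open CBG in
theorem crossed_bilayer_irreducible :
    ¬ ∃ f g : LaurentZZ,
      ((!![-3, 0, 1 + zz (-1) 0 + zz 0 (-1), 0;
           0, -3, 0, 1 + zz (-1) 0 + zz 0 (-1);
           1 + zz 1 0 + zz 0 1, 0, -3, 0;
           0, 1 + zz 1 0 + zz 0 1, 0, -3] +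
        !![-1, 0, 0, 1;
           0, -2, 1, 0;
           0, 1, -1, 0;
           1, 0, 0, -1] : Matrix (Fin 4) (Fin 4) LaurentZZ).det = f * g)
      ∧ ¬ f.IsMonomial ∧ ¬ g.IsMonomial := by
  rintro ⟨f, g, hfg, hf, hg⟩
  have hfg' : detMat.det = f * g := hfg
  have hf0 : f ≠ 0 := fun h => hf ⟨0, 0, by rw [h]; exact (AddMonoidAlgebra.single_zero _).symm⟩
  have hg0 : g ≠ 0 := fun h => hg ⟨0, 0, by rw [h]; exact (AddMonoidAlgebra.single_zero _).symm⟩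
  have hFne : Phi f ≠ 0 := fun h => hf0 (by rw [← Psi_Phi f, h, map_zero])
  have hGne : Phi g ≠ 0 := fun h => hg0 (by rw [← Psi_Phi g, h, map_zero])
  obtain ⟨nf, F', hF'⟩ := exists_T_pow (Phi f)
  obtain ⟨ng, G', hG'⟩ := exists_T_pow (Phi g)
  have hF'ne : F' ≠ 0 := by
    intro h
    rw [h, map_zero] at hF'
    exact (mul_ne_zero hFne (isUnit_T _).ne_zero) hF'.symm
  have hG'ne : G' ≠ 0 := by
    intro h
    rw [h, map_zero] at hG'
    exact (mul_ne_zero hGne (isUnit_T _).ne_zero) hG'.symm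
  have hC2 : (LaurentPolynomial.C (T 2 : LaurentPolynomial ℂ))
      = LaurentPolynomial.C (T 1) * LaurentPolynomial.C (T 1) := by
    rw [← _root_.map_mul, ← T_add]; norm_num
  have key : F' * G' * Polynomial.C (T 2) * X = Qpoly * X^(nf+ng) := by
    apply toLaurent_injective
    have lhs_eq : toLaurent (F' * G' * Polynomial.C (T 2) * X)
        = (Phi f * T (nf:ℤ)) * (Phi g * T (ng:ℤ)) * LaurentPolynomial.C (T 2) * T 1 := by
      rw [_root_.map_mul, _root_.map_mul, _root_.map_mul, Polynomial.toLaurent_C,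
        Polynomial.toLaurent_X, hF', hG']
    have rhs_eq : toLaurent (Qpoly * X^(nf+ng))
        = Phi f * Phi g * (T 1 * LaurentPolynomial.C (T 1) * LaurentPolynomial.C (T 1))
          * (T (nf:ℤ) * T (ng:ℤ)) := by
      rw [_root_.map_mul, Polynomial.toLaurent_X_pow, ← main_det, hfg', _root_.map_mul,
        show ((nf+ng:ℕ):ℤ) = (nf:ℤ)+(ng:ℤ) by push_cast; ring, T_add]
    rw [lhs_eq, rhs_eq, hC2]
    ring
  obtain ⟨e1, F0, hsF, hF0c⟩ := strip F' hF'ne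
  obtain ⟨e2, G0, hsG, hG0c⟩ := strip G' hG'ne
  have hQeq : Qpoly = F0 * G0 * Polynomial.C (T 2) := by
    symm
    apply cancelX (m := e1+e2+1) (n := nf+ng)
    · rw [Polynomial.mul_coeff_zero, Polynomial.mul_coeff_zero, Polynomial.coeff_C_zero]
      exact mul_ne_zero (mul_ne_zero hF0c hG0c) CT2_coeff_ne
    · rw [Qc0]; exact two_T_KA_ne
    · rw [← key, hsF, hsG]; ring
  have hF0ne : F0 ≠ 0 := fun h => hF0c (by rw [h]; simp)
  have hG0ne : G0 ≠ 0 := fun h => hG0c (by rw [h]; simp)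
  have hdegs : F0.natDegree + G0.natDegree = 2 := by
    have hCne : (Polynomial.C (T 2) : Polynomial (LaurentPolynomial ℂ)) ≠ 0 :=
      Polynomial.C_ne_zero.mpr CT2_coeff_ne
    have := Qdeg
    rw [hQeq, Polynomial.natDegree_mul (mul_ne_zero hF0ne hG0ne) hCne,
      Polynomial.natDegree_mul hF0ne hG0ne, Polynomial.natDegree_C] at this
    omega
  have hcase : F0.natDegree = 0 ∨ (F0.natDegree = 1 ∧ G0.natDegree = 1) ∨ G0.natDegree = 0 := by
    omega
  rcases hcase with hd | ⟨hd1, hd2⟩ | hd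
  · -- F0 constant: f is a monomial
    have hF0C : F0 = Polynomial.C (F0.coeff 0) := Polynomial.eq_C_of_natDegree_eq_zero hd
    set a := F0.coeff 0 with ha
    have hdvd2K : a ∣ 2 * KA := by
      have h2 := congrArg (fun p => Polynomial.coeff p 2) hQeq
      simp only [Qc2] at h2
      rw [hF0C, mul_assoc, Polynomial.coeff_C_mul] at h2
      exact ⟨_, h2⟩
    have hdvdL : a ∣ LA := by
      have h1 := congrArg (fun p => Polynomial.coeff p 1) hQeq
      simp only [Qc1] at h1
      rw [hF0C, mul_assoc, Polynomial.coeff_C_mul] at h1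
      exact ⟨_, h1⟩
    have hu : IsUnit a := unit_of_dvd hdvd2K hdvdL
    exact hf (isMonomial_of f nf e1 a (by rw [← hF', hsF, ← hF0C]) hu)
  · -- both degree one: contradiction with the quadratic discriminant
    set f0 := F0.coeff 0 with hf0d
    set f1 := F0.coeff 1 with hf1d
    set g0 := G0.coeff 0 with hg0d
    set g1 := G0.coeff 1 with hg1d
    have hF0e : F0 = Polynomial.C f1 * X + Polynomial.C f0 :=
      Polynomial.eq_X_add_C_of_natDegree_le_one (by omega)
    have hG0e : G0 = Polynomial.C g1 * X + Polynomial.C g0 :=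
      Polynomial.eq_X_add_C_of_natDegree_le_one (by omega)
    have hexp : Qpoly = Polynomial.C (f1*g1*T 2) * X^2
        + Polynomial.C ((f0*g1 + f1*g0)*T 2) * X + Polynomial.C (f0*g0*T 2) := by
      rw [hQeq, hF0e, hG0e]
      simp only [_root_.map_mul, map_add]
      ring
    have eq0 : 2 * T 1 * KA = f0*g0*T 2 := by
      rw [← Qc0, hexp]; exact (quad_c0 _ _ _)
    have eq1 : LA = (f0*g1 + f1*g0)*T 2 := by
      rw [← Qc1, hexp]; exact (quad_c1 _ _ _)
    have eq2 : 2 * KA = f1*g1*T 2 := by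
      rw [← Qc2, hexp]; exact (quad_c2 _ _ _)
    have e1' : T 2 * (f0*g1) + T 2 * (f1*g0) = LA := by linear_combination -eq1
    have h4 : (T 2*(f0*g0)) * (T 2*(f1*g1)) = (2*T 1*KA) * (2*KA) := by
      linear_combination (-(T 2*(f1*g1))) * eq0 - (2*T 1*KA) * eq2
    have hs : (T 2 * (f0*g1) - T 2 * (f1*g0))^2 = LA^2 - 16 * T 1 * KA^2 := by
      linear_combination (T 2*(f0*g1) + T 2*(f1*g0) + LA) * e1' - 4 * h4
    have hs2 : (T 2 * (f0*g1) - T 2 * (f1*g0))^2 = toLaurent (Lpoly^2 - 16*X*Kpoly^2) := by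
      rw [hs, map_sub, _root_.map_mul, _root_.map_mul, map_pow, map_pow, map_ofNat,
        Polynomial.toLaurent_X, ← KA_eq, ← LA_eq]
    exact not_square _ hs2
  · -- G0 constant: g is a monomial
    have hG0C : G0 = Polynomial.C (G0.coeff 0) := Polynomial.eq_C_of_natDegree_eq_zero hd
    set a := G0.coeff 0 with ha
    have hdvd2K : a ∣ 2 * KA := by
      have h2 := congrArg (fun p => Polynomial.coeff p 2) hQeq
      simp only [Qc2] at h2
      rw [hG0C, show F0 * Polynomial.C a * Polynomial.C (T 2)
        = Polynomial.C a * (F0 * Polynomial.C (T 2)) by ring, Polynomial.coeff_C_mul] at h2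
      exact ⟨_, h2⟩
    have hdvdL : a ∣ LA := by
      have h1 := congrArg (fun p => Polynomial.coeff p 1) hQeq
      simp only [Qc1] at h1
      rw [hG0C, show F0 * Polynomial.C a * Polynomial.C (T 2)
        = Polynomial.C a * (F0 * Polynomial.C (T 2)) by ring, Polynomial.coeff_C_mul] at h1
      exact ⟨_, h1⟩
    have hu : IsUnit a := unit_of_dvd hdvd2K hdvdL
    exact hg (isMonomial_of g ng e2 a (by rw [← hG', hsG, ← hG0C]) hu)
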